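/- Let N ≥ 1 and u ∈ L¹(ℝ^N) ∩ W^{1,∞}(ℝ^N). Then there is a constant C depending only on N such that ‖u‖_∞ ≤ C·‖∇u‖_∞^{N/(N+1)}·‖u‖_1^{1/(N+1)}. -/

import Mathlib

open MeasureTheory Metric

theorem stmt_13 (N : ℕ) (hN : 1 ≤ N) :
    ∃ C : ℝ, 0 < C ∧
      ∀ (u : EuclideanSpace ℝ (Fin N) → ℝ) (L : NNReal),
        LipschitzWith L u → Integrable u →
        ∀ x : EuclideanSpace ℝ (Fin N),
          |u x| ≤ C * (L : ℝ) ^ ((N : ℝ) / (N + 1)) *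
            (∫ y, |u y|) ^ ((1 : ℝ) / (N + 1)) := by
  haveI : Nonempty (Fin N) := ⟨⟨0, hN⟩⟩
  set V : ℝ := (volume (ball (0 : EuclideanSpace ℝ (Fin N)) 1)).toReal with hVdef
  have hVpos : 0 < V := ENNReal.toReal_pos (measure_ball_pos volume 0 one_pos).ne'
    measure_ball_lt_top.ne
  have hN1 : ((N : ℝ) + 1) ≠ 0 := by positivity
  refine ⟨(2 ^ (N + 1) / V) ^ ((1 : ℝ) / (N + 1)), by positivity, ?_⟩
  intro u L hL hu x
  have hInt : 0 ≤ ∫ y, |u y| := integral_nonneg fun y => abs_nonneg _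
  have hRHS : 0 ≤ (2 ^ (N + 1) / V) ^ ((1 : ℝ) / (N + 1)) * (L : ℝ) ^ ((N : ℝ) / (N + 1)) *
      (∫ y, |u y|) ^ ((1 : ℝ) / (N + 1)) := by positivity
  rcases eq_or_lt_of_le (abs_nonneg (u x)) with ha | ha
  · rw [← ha]; exact hRHS
  set a : ℝ := |u x| with hadef
  rcases eq_or_lt_of_le L.coe_nonneg with hL0 | hLpos
  · -- L = 0 : u is constant, integrable hence zero
    exfalso
    have hconst : ∀ y, u y = u x := by
      intro y
      have := hL.dist_le_mul y x
      rw [← hL0] at this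
      simpa using this
    have : Integrable (fun _ : EuclideanSpace ℝ (Fin N) => u x) := by
      apply hu.congr
      filter_upwards with y using hconst y
    rw [integrable_const_iff] at this
    rcases this with h | h
    · rw [hadef, h, abs_zero] at ha; exact lt_irrefl _ ha
    · haveI := h
      exact measure_ne_top (volume : Measure (EuclideanSpace ℝ (Fin N))) Set.univ
        (measure_univ_of_isAddLeftInvariant _)
  -- main case
  set r : ℝ := a / (2 * (L : ℝ)) with hrdef
  have hr : 0 < r := by positivity
  have habs : Integrable (fun y => |u y|) := hu.abs
  have hlow : ∀ y ∈ ball x r, a / 2 ≤ |u y| := by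
    intro y hy
    have h1 : dist (u x) (u y) ≤ (L : ℝ) * dist x y := hL.dist_le_mul x y
    have h2 : dist x y < r := by rwa [mem_ball, dist_comm] at hy
    have h3 : dist (u x) (u y) < (L : ℝ) * r :=
      lt_of_le_of_lt h1 (by exact (mul_lt_mul_iff_right₀ hLpos).mpr h2)
    have h4 : (L : ℝ) * r = a / 2 := by
      rw [hrdef]; field_simp
    have h5 : a - |u y| ≤ |u x - u y| := by
      rw [hadef]; exact abs_sub_abs_le_abs_sub _ _
    have h6 : |u x - u y| = dist (u x) (u y) := (Real.dist_eq _ _).symm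
    linarith [h3, h4 ▸ h3, h5, h6 ▸ h5]
  have h1 : a / 2 * (volume (ball x r)).toReal ≤ ∫ y in ball x r, |u y| :=
    setIntegral_ge_of_const_le_real measurableSet_ball measure_ball_lt_top.ne hlow
      habs.integrableOn
  have h2 : ∫ y in ball x r, |u y| ≤ ∫ y, |u y| :=
    setIntegral_le_integral habs (Filter.Eventually.of_forall fun y => abs_nonneg _)
  have hvol : (volume (ball x r)).toReal = r ^ N * V := by
    rw [Measure.addHaar_ball volume x hr.le, ENNReal.toReal_mul,
      ENNReal.toReal_ofReal (by positivity), finrank_euclideanSpace_fin]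
  set I : ℝ := ∫ y, |u y| with hIdef
  have hkey : a ^ (N + 1) ≤ 2 ^ (N + 1) / V * (L : ℝ) ^ N * I := by
    have h3 : a / 2 * (r ^ N * V) ≤ I := by
      rw [← hvol]; exact h1.trans h2
    have e : a / 2 * (r ^ N * V) = a ^ (N + 1) * V / (2 ^ (N + 1) * (L : ℝ) ^ N) := by
      rw [hrdef, div_pow, mul_pow]
      field_simp
      ring
    rw [e, div_le_iff₀ (by positivity)] at h3
    rw [div_mul_eq_mul_div, div_mul_eq_mul_div, le_div_iff₀ hVpos]
    linarith [h3]
  have hfin : a ≤ (2 ^ (N + 1) / V * (L : ℝ) ^ N * I) ^ ((1 : ℝ) / (N + 1)) := by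
    have : a = (a ^ (N + 1)) ^ ((1 : ℝ) / (N + 1)) := by
      rw [← Real.rpow_natCast a (N + 1), ← Real.rpow_mul ha.le]
      push_cast
      rw [mul_one_div, div_self hN1, Real.rpow_one]
    rw [this]
    exact Real.rpow_le_rpow (by positivity) hkey (by positivity)
  calc a ≤ (2 ^ (N + 1) / V * (L : ℝ) ^ N * I) ^ ((1 : ℝ) / (N + 1)) := hfin
    _ = (2 ^ (N + 1) / V) ^ ((1 : ℝ) / (N + 1)) * (L : ℝ) ^ ((N : ℝ) / (N + 1)) *
        I ^ ((1 : ℝ) / (N + 1)) := by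
      rw [Real.mul_rpow (by positivity) hInt, Real.mul_rpow (by positivity) (by positivity)]
      congr 1
      rw [← Real.rpow_natCast (L : ℝ) N, ← Real.rpow_mul L.coe_nonneg]
      congr 1
      push_cast
      rw [mul_one_div]
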